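/- (Linearized spectrum of constant-amplitude solutions, unstable case) For μ₁, α ∈ ℝ and λ ∈ ℂ, define the 2×2 matrix L_A(λ) with entries L₁₁ = λ² − 2i·λ·μ₁ + μ₁² + α, L₁₂ = L₂₁ = μ₁² + α, L₂₂ = λ² + 2i·λ·μ₁ + μ₁² + α. If 3μ₁² + α < 0, then λ = √(−2(3μ₁² + α)) is a positive real root of det L_A(λ) = 0; in particular, when α < 0 the constant-amplitude solution is linearly unstable precisely for μ₁² < −α/3. -/
import Mathlib


open Complex Matrix

/-- (Linearized spectrum, unstable case) If `3μ₁² + α < 0`, then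
`λ = √(−2(3μ₁² + α))` is a positive real root of `det L_A(λ) = 0`; in particular, for
`α < 0`, the linearization has a root with positive real part precisely when
`μ₁² < −α/3`. -/
theorem linearized_spectrum_unstable (μ₁ α : ℝ)
    (LA : ℂ → Matrix (Fin 2) (Fin 2) ℂ)
    (hLA : ∀ lam : ℂ, LA lam =
      !![lam ^ 2 - 2 * Complex.I * lam * (μ₁ : ℂ) + (μ₁ : ℂ) ^ 2 + (α : ℂ),
         (μ₁ : ℂ) ^ 2 + (α : ℂ);
         (μ₁ : ℂ) ^ 2 + (α : ℂ),
         lam ^ 2 + 2 * Complex.I * lam * (μ₁ : ℂ) + (μ₁ : ℂ) ^ 2 + (α : ℂ)]) :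
    (3 * μ₁ ^ 2 + α < 0 →
        0 < Real.sqrt (-(2 * (3 * μ₁ ^ 2 + α))) ∧
          (LA ((Real.sqrt (-(2 * (3 * μ₁ ^ 2 + α))) : ℝ) : ℂ)).det = 0) ∧
      (α < 0 →
        ((∃ lam : ℂ, 0 < lam.re ∧ (LA lam).det = 0) ↔ μ₁ ^ 2 < -α / 3)) := by
  have key : ∀ lam : ℂ, (LA lam).det =
      lam ^ 2 * (lam ^ 2 + 2 * (3 * (μ₁ : ℂ) ^ 2 + (α : ℂ))) := by
    intro lam
    rw [hLA, Matrix.det_fin_two_of]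
    linear_combination (-4 * lam ^ 2 * (μ₁ : ℂ) ^ 2) * Complex.I_sq
  have fwd : 3 * μ₁ ^ 2 + α < 0 →
      0 < Real.sqrt (-(2 * (3 * μ₁ ^ 2 + α))) ∧
        (LA ((Real.sqrt (-(2 * (3 * μ₁ ^ 2 + α))) : ℝ) : ℂ)).det = 0 := by
    intro h
    have hpos : (0 : ℝ) < -(2 * (3 * μ₁ ^ 2 + α)) := by linarith
    refine ⟨Real.sqrt_pos.mpr hpos, ?_⟩
    rw [key]
    have hsq : (Real.sqrt (-(2 * (3 * μ₁ ^ 2 + α)))) ^ 2 = -(2 * (3 * μ₁ ^ 2 + α)) :=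
      Real.sq_sqrt hpos.le
    have : ((Real.sqrt (-(2 * (3 * μ₁ ^ 2 + α))) : ℝ) : ℂ) ^ 2
        = ((-(2 * (3 * μ₁ ^ 2 + α)) : ℝ) : ℂ) := by
      rw [← Complex.ofReal_pow, hsq]
    rw [this]
    push_cast
    ring
  refine ⟨fwd, fun hα => ⟨?_, fun h => ?_⟩⟩
  · rintro ⟨lam, hre, hdet⟩
    rw [key] at hdet
    have hlam : lam ≠ 0 := fun h0 => by simp [h0] at hre
    have h2 : lam ^ 2 = ((-(2 * (3 * μ₁ ^ 2 + α)) : ℝ) : ℂ) := by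
      push_cast
      rcases mul_eq_zero.mp hdet with h | h
      · exact absurd (pow_eq_zero_iff (by norm_num) |>.mp h) hlam
      · linear_combination h
    have him : (lam ^ 2).im = 0 := by rw [h2]; simp [← Complex.ofReal_pow]
    have him' : lam.im = 0 := by
      have h3 : 2 * lam.re * lam.im = 0 := by
        have := him
        simp [pow_two, Complex.mul_im] at this
        linarith
      rcases mul_eq_zero.mp h3 with h | h
      · linarith
      · exact h
    have hre2 : (lam ^ 2).re = -(2 * (3 * μ₁ ^ 2 + α)) := by rw [h2]; simp [← Complex.ofReal_pow]
    have hsq : lam.re ^ 2 = -(2 * (3 * μ₁ ^ 2 + α)) := by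
      rw [← hre2]; simp [pow_two, Complex.mul_re, him']
    nlinarith [hre, hsq]
  · obtain ⟨hs, hd⟩ := fwd (by linarith)
    exact ⟨_, by simpa using hs, hd⟩
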